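/- Let a, b be compactly supported generalized real numbers with a << b, and let f ∈ G(ℝ). If ∫_a^b |f| dx = 0 in ℝ̃, i.e. the net (∫_{a_ε}^{b_ε} |f_ε(x)|dx)_ε is negligible, then f(x_c) = 0 in ℝ̃ for every compactly supported generalized point x_c satisfying a ≤ x_c ≤ b. -/

import Mathlib

open Set Filter Topology MeasureTheory

noncomputable section

variable {E F : Type*} [NormedAddCommGroup E] [NormedSpace ℝ E]
  [NormedAddCommGroup F] [NormedSpace ℝ F]

/-- A net of smooth functions, indexed by `ε ∈ (0,1]`, is *moderate* on the open set `Ω`: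
all iterated derivatives are `O(ε^{-N})` on compact subsets, for some `N`. -/
def IsModerate (Ω : Set E) (u : ℝ → E → F) : Prop :=
  (∀ ε ∈ Set.Ioc (0:ℝ) 1, ContDiffOn ℝ (⊤:ℕ∞) (u ε) Ω) ∧
  ∀ K : Set E, IsCompact K → K ⊆ Ω → ∀ n : ℕ, ∃ N : ℕ, ∃ C : ℝ, ∃ ε₀ : ℝ, 0 < ε₀ ∧
    ∀ ε : ℝ, 0 < ε → ε < ε₀ → ∀ x ∈ K,
      ‖iteratedFDerivWithin ℝ n (u ε) Ω x‖ ≤ C * ε ^ (-(N:ℤ))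

/-- A net of smooth functions is *negligible* on `Ω`: all iterated derivatives are `O(ε^m)`
on compact subsets, for every `m`. -/
def IsNegligible (Ω : Set E) (u : ℝ → E → F) : Prop :=
  (∀ ε ∈ Set.Ioc (0:ℝ) 1, ContDiffOn ℝ (⊤:ℕ∞) (u ε) Ω) ∧
  ∀ K : Set E, IsCompact K → K ⊆ Ω → ∀ n : ℕ, ∀ m : ℕ, ∃ C : ℝ, ∃ ε₀ : ℝ, 0 < ε₀ ∧
    ∀ ε : ℝ, 0 < ε → ε < ε₀ → ∀ x ∈ K,
      ‖iteratedFDerivWithin ℝ n (u ε) Ω x‖ ≤ C * ε ^ m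

/-- A net of numbers is *moderate*: `O(ε^{-N})` for some `N`. -/
def NumModerate (c : ℝ → F) : Prop :=
  ∃ N : ℕ, ∃ C : ℝ, ∃ ε₀ : ℝ, 0 < ε₀ ∧ ∀ ε : ℝ, 0 < ε → ε < ε₀ → ‖c ε‖ ≤ C * ε ^ (-(N:ℤ))

/-- A net of numbers is *negligible*: `O(ε^m)` for every `m`. -/
def NumNegligible (c : ℝ → F) : Prop :=
  ∀ m : ℕ, ∃ C : ℝ, ∃ ε₀ : ℝ, 0 < ε₀ ∧ ∀ ε : ℝ, 0 < ε → ε < ε₀ → ‖c ε‖ ≤ C * ε ^ m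

/-- A net of points is a representative of a *compactly supported generalized point* of `Ω`. -/
def CompactlySupportedPoint (Ω : Set E) (a : ℝ → E) : Prop :=
  ∃ K : Set E, IsCompact K ∧ K ⊆ Ω ∧ ∃ ε₀ : ℝ, 0 < ε₀ ∧ ∀ ε : ℝ, 0 < ε → ε < ε₀ → a ε ∈ K

/-- The partial order on generalized reals, on representatives: `a ≤ b` iff `b - a` has a
representative with all terms nonnegative, i.e. `a ε + n ε ≤ b ε` for some negligible `n`. -/
def TildeLe (a b : ℝ → ℝ) : Prop :=
  ∃ n : ℝ → ℝ, NumNegligible n ∧ ∀ ε ∈ Set.Ioc (0:ℝ) 1, a ε + n ε ≤ b ε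

/-- Strict order `a << b`: `b - a` is strictly positive, i.e. `b ε - a ε > ε^m` for some `m`
and all small `ε`. -/
def TildeLt (a b : ℝ → ℝ) : Prop :=
  ∃ m : ℕ, ∃ ε₀ : ℝ, 0 < ε₀ ∧ ∀ ε : ℝ, 0 < ε → ε < ε₀ → a ε + ε ^ m < b ε

set_option maxHeartbeats 1000000 in
lemma key_integral {g : ℝ → ℂ} {A B x' Λ : ℝ} (hg : Continuous g) (hAB : A ≤ B)
    (hx' : x' ∈ Set.Icc A B) (hΛ : 0 < Λ)
    (hlip : ∀ y ∈ Set.Icc A B, ∀ z ∈ Set.Icc A B, ‖g y - g z‖ ≤ Λ * |y - z|) :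
    ‖g x'‖ / 2 * min (‖g x'‖ / (2 * Λ)) ((B - A) / 2) ≤ ∫ t in A..B, ‖g t‖ := by
  set M := ‖g x'‖ with hM
  have hM0 : 0 ≤ M := norm_nonneg _
  set δ := min (M / (2 * Λ)) ((B - A) / 2) with hδ
  have hδ0 : 0 ≤ δ := le_min (by positivity) (by linarith [hx'.1, hx'.2])
  have hδBA : δ ≤ (B - A) / 2 := min_le_right _ _
  have hΛδ : Λ * δ ≤ M / 2 := by
    have h1 : Λ * δ ≤ Λ * (M / (2 * Λ)) := by
      apply mul_le_mul_of_nonneg_left (min_le_left _ _) hΛ.le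
    have h2 : Λ * (M / (2 * Λ)) = M / 2 := by field_simp
    linarith
  obtain ⟨c, d, hAc, hcd, hdB, hdc, hnear⟩ :
      ∃ c d, A ≤ c ∧ c ≤ d ∧ d ≤ B ∧ d - c = δ ∧ ∀ t ∈ Set.Icc c d, |t - x'| ≤ δ := by
    rcases le_total x' ((A + B) / 2) with h | h
    · exact ⟨x', x' + δ, hx'.1, by linarith, by linarith, by ring,
        fun t ht => abs_le.2 ⟨by linarith [ht.1], by linarith [ht.2]⟩⟩
    · exact ⟨x' - δ, x', by linarith [hx'.1], by linarith, hx'.2, by ring,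
        fun t ht => abs_le.2 ⟨by linarith [ht.1], by linarith [ht.2]⟩⟩
  have hsub : Set.Icc c d ⊆ Set.Icc A B := Set.Icc_subset_Icc hAc hdB
  have hlow : ∀ t ∈ Set.Icc c d, M / 2 ≤ ‖g t‖ := by
    intro t ht
    have h1 := hlip x' hx' t (hsub ht)
    have h2 : Λ * |x' - t| ≤ Λ * δ := by
      apply mul_le_mul_of_nonneg_left _ hΛ.le
      rw [abs_sub_comm]; exact hnear t ht
    have h3 : M - ‖g t‖ ≤ ‖g x' - g t‖ := norm_sub_norm_le _ _
    linarith
  have hint1 : IntervalIntegrable (fun t => ‖g t‖) volume c d :=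
    (hg.norm).intervalIntegrable _ _
  have hint2 : IntervalIntegrable (fun t => ‖g t‖) volume A B :=
    (hg.norm).intervalIntegrable _ _
  have h1 : M / 2 * δ ≤ ∫ t in c..d, ‖g t‖ := by
    have := intervalIntegral.integral_mono_on hcd (intervalIntegrable_const (c := M / 2))
      hint1 hlow
    rwa [intervalIntegral.integral_const, smul_eq_mul, hdc, mul_comm] at this
  have h2 : (∫ t in c..d, ‖g t‖) ≤ ∫ t in A..B, ‖g t‖ := by
    apply intervalIntegral.integral_mono_interval hAc hcd hdB
      (Filter.Eventually.of_forall fun t => norm_nonneg _) hint2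
  linarith

set_option maxHeartbeats 1000000 in
/-- if `∫_a^b |f| = 0` in ℝ̃ (with `a << b`), then `f(x_c) = 0` for every
compactly supported generalized point `x_c` with `a ≤ x_c ≤ b`. -/
theorem statement_2
    (a b x : ℝ → ℝ) (f : ℝ → ℝ → ℂ)
    (haC : CompactlySupportedPoint (Set.univ : Set ℝ) a)
    (hbC : CompactlySupportedPoint (Set.univ : Set ℝ) b)
    (hab : TildeLt a b)
    (hf : IsModerate (Set.univ : Set ℝ) f)
    (hint : NumNegligible (fun ε => ∫ t in a ε..b ε, ‖f ε t‖))
    (hxC : CompactlySupportedPoint (Set.univ : Set ℝ) x)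
    (hax : TildeLe a x) (hxb : TildeLe x b) :
    NumNegligible (fun ε => f ε (x ε)) := by
  obtain ⟨hf1, hf2⟩ := hf
  obtain ⟨Ka, hKa, -, εa, hεa, hha⟩ := haC
  obtain ⟨Kb, hKb, -, εb, hεb, hhb⟩ := hbC
  obtain ⟨Kx, hKx, -, εx, hεx, hhx⟩ := hxC
  obtain ⟨Ra, hRa⟩ := hKa.isBounded.subset_closedBall 0
  obtain ⟨Rb, hRb⟩ := hKb.isBounded.subset_closedBall 0
  obtain ⟨Rx, hRx⟩ := hKx.isBounded.subset_closedBall 0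
  set R := max Ra (max Rb Rx) with hRdef
  have hmemR : ∀ y : ℝ, y ∈ Metric.closedBall (0:ℝ) Ra ∪ (Metric.closedBall (0:ℝ) Rb ∪ Metric.closedBall (0:ℝ) Rx) → |y| ≤ R := by
    intro y hy
    rcases hy with hy | hy | hy <;>
      · rw [Metric.mem_closedBall, Real.dist_eq, sub_zero] at hy
        simp only [hRdef, le_max_iff]
        tauto
  have haR : ∀ ε : ℝ, 0 < ε → ε < εa → |a ε| ≤ R := fun ε h1 h2 =>
    hmemR _ (Or.inl (hRa (hha ε h1 h2)))
  have hbR : ∀ ε : ℝ, 0 < ε → ε < εb → |b ε| ≤ R := fun ε h1 h2 =>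
    hmemR _ (Or.inr (Or.inl (hRb (hhb ε h1 h2))))
  have hxR : ∀ ε : ℝ, 0 < ε → ε < εx → |x ε| ≤ R := fun ε h1 h2 =>
    hmemR _ (Or.inr (Or.inr (hRx (hhx ε h1 h2))))
  obtain ⟨N₁, C₁, ε₁, hε₁, hd⟩ := hf2 (Set.Icc (-R) R) isCompact_Icc (Set.subset_univ _) 1
  set K1 := max C₁ 0 + 1 with hK1def
  have hK1pos : (0:ℝ) < K1 := by positivity
  have hsm : ∀ ε : ℝ, 0 < ε → ε ≤ 1 → ContDiff ℝ (⊤:ℕ∞) (f ε) := fun ε h1 h2 =>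
    contDiffOn_univ.mp (hf1 ε ⟨h1, h2⟩)
  have hfd : ∀ ε : ℝ, 0 < ε → ε < ε₁ → ∀ y ∈ Set.Icc (-R) R,
      ‖fderiv ℝ (f ε) y‖ ≤ K1 * (ε ^ N₁)⁻¹ := by
    intro ε h1 h2 y hy
    have h := hd ε h1 h2 y hy
    rw [iteratedFDerivWithin_univ] at h
    have e1 : ‖fderiv ℝ (f ε) y‖ = ‖iteratedFDeriv ℝ 1 (f ε) y‖ := by
      rw [← norm_iteratedFDeriv_fderiv (n := 0), norm_iteratedFDeriv_zero]
    have e2 : ε ^ (-(N₁:ℤ)) = (ε ^ N₁)⁻¹ := by rw [zpow_neg, zpow_natCast]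
    rw [e1]
    rw [e2] at h
    have hinv : (0:ℝ) ≤ (ε ^ N₁)⁻¹ := by positivity
    have : C₁ * (ε ^ N₁)⁻¹ ≤ K1 * (ε ^ N₁)⁻¹ := by
      apply mul_le_mul_of_nonneg_right _ hinv
      simp only [hK1def]
      have := le_max_left C₁ (0:ℝ); linarith
    linarith
  obtain ⟨m, εm, hεm, hm⟩ := hab
  obtain ⟨n1, hn1, hn1le⟩ := hax
  obtain ⟨n2, hn2, hn2le⟩ := hxb
  intro p
  obtain ⟨CI1, εI1, hεI1, hI1⟩ := hint (N₁ + 2 * p)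
  obtain ⟨CI2, εI2, hεI2, hI2⟩ := hint (m + p)
  obtain ⟨Cn1, εn1, hεn1, hb1⟩ := hn1 (N₁ + p)
  obtain ⟨Cn2, εn2, hεn2, hb2⟩ := hn2 (N₁ + p)
  set D1 := Real.sqrt (4 * K1 * max CI1 0) with hD1def
  have hD1nn : 0 ≤ D1 := Real.sqrt_nonneg _
  set D2 := 4 * max CI2 0 with hD2def
  have hD2nn : 0 ≤ D2 := by positivity
  refine ⟨D1 + D2 + K1 * (max Cn1 0 + max Cn2 0),
    min 1 (min εa (min εb (min εx (min ε₁ (min εm (min εI1 (min εI2 (min εn1 εn2)))))))),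
    by positivity, ?_⟩
  intro ε hε0 hεlt
  simp only [lt_min_iff] at hεlt
  obtain ⟨hlt1, hlta, hltb, hltx, hlt₁, hltm, hltI1, hltI2, hltn1, hltn2⟩ := hεlt
  have hε1 : ε ≤ 1 := hlt1.le
  have hεppos : (0:ℝ) < ε ^ p := pow_pos hε0 p
  have hεN₁pos : (0:ℝ) < ε ^ N₁ := pow_pos hε0 N₁
  have hABlt : a ε + ε ^ m < b ε := hm ε hε0 hltm
  have hεmpos : (0:ℝ) < ε ^ m := pow_pos hε0 m
  have hAB : a ε ≤ b ε := by linarith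
  have hAR := haR ε hε0 hlta
  have hBR := hbR ε hε0 hltb
  have hXR := hxR ε hε0 hltx
  have hIccsub : Set.Icc (a ε) (b ε) ⊆ Set.Icc (-R) R :=
    Set.Icc_subset_Icc (by linarith [(abs_le.mp hAR).1]) (abs_le.mp hBR).2
  set x' := max (a ε) (min (x ε) (b ε)) with hx'def
  have hx'mem : x' ∈ Set.Icc (a ε) (b ε) :=
    ⟨le_max_left _ _, max_le hAB (min_le_right _ _)⟩
  have hax' : a ε + n1 ε ≤ x ε := hn1le ε ⟨hε0, hε1⟩
  have hxb' : x ε + n2 ε ≤ b ε := hn2le ε ⟨hε0, hε1⟩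
  have hn1abs : |n1 ε| ≤ max Cn1 0 * ε ^ (N₁ + p) := by
    have := hb1 ε hε0 hltn1
    rw [Real.norm_eq_abs] at this
    calc |n1 ε| ≤ Cn1 * ε ^ (N₁ + p) := this
      _ ≤ max Cn1 0 * ε ^ (N₁ + p) := by
          apply mul_le_mul_of_nonneg_right (le_max_left _ _) (by positivity)
  have hn2abs : |n2 ε| ≤ max Cn2 0 * ε ^ (N₁ + p) := by
    have := hb2 ε hε0 hltn2
    rw [Real.norm_eq_abs] at this
    calc |n2 ε| ≤ Cn2 * ε ^ (N₁ + p) := this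
      _ ≤ max Cn2 0 * ε ^ (N₁ + p) := by
          apply mul_le_mul_of_nonneg_right (le_max_left _ _) (by positivity)
  have hdist : |x ε - x'| ≤ |n1 ε| + |n2 ε| := by
    have l1 : -|n1 ε| ≤ n1 ε := neg_abs_le _
    have l2 : -|n2 ε| ≤ n2 ε := neg_abs_le _
    have p1 : (0:ℝ) ≤ |n1 ε| := abs_nonneg _
    have p2 : (0:ℝ) ≤ |n2 ε| := abs_nonneg _
    rcases le_total (x ε) (a ε) with h | h
    · have e1 : min (x ε) (b ε) = x ε := min_eq_left (h.trans hAB)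
      have e2 : x' = a ε := by rw [hx'def, e1]; exact max_eq_left h
      rw [e2, abs_of_nonpos (by linarith)]
      linarith
    · rcases le_total (x ε) (b ε) with h' | h'
      · have e1 : min (x ε) (b ε) = x ε := min_eq_left h'
        have e2 : x' = x ε := by rw [hx'def, e1]; exact max_eq_right h
        rw [e2]; simp; linarith
      · have e1 : min (x ε) (b ε) = b ε := min_eq_right h'
        have e2 : x' = b ε := by rw [hx'def, e1]; exact max_eq_right hAB
        rw [e2, abs_of_nonneg (by linarith)]
        linarith
  set Λ := K1 * (ε ^ N₁)⁻¹ with hΛdef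
  have hΛpos : 0 < Λ := by positivity
  have hcont : Continuous (f ε) := (hsm ε hε0 hε1).continuous
  have hlip : ∀ y ∈ Set.Icc (-R) R, ∀ z ∈ Set.Icc (-R) R,
      ‖f ε y - f ε z‖ ≤ Λ * |y - z| := by
    intro y hy z hz
    have := (convex_Icc (-R) R).norm_image_sub_le_of_norm_fderiv_le
      (fun w _ => ((hsm ε hε0 hε1).differentiable (by simp)) w)
      (fun w hw => hfd ε hε0 hlt₁ w hw) hz hy
    simpa [Real.norm_eq_abs] using this
  have hkey := key_integral (g := f ε) hcont hAB hx'mem hΛpos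
    (fun y hy z hz => hlip y (hIccsub hy) z (hIccsub hz))
  set M := ‖f ε x'‖ with hMdef
  have hM0 : (0:ℝ) ≤ M := norm_nonneg _
  set I := ∫ t in a ε..b ε, ‖f ε t‖ with hIdef
  have hI1' : I ≤ max CI1 0 * ε ^ (N₁ + 2 * p) := by
    have h := hI1 ε hε0 hltI1
    rw [Real.norm_eq_abs] at h
    calc I ≤ |I| := le_abs_self _
      _ ≤ CI1 * ε ^ (N₁ + 2 * p) := h
      _ ≤ max CI1 0 * ε ^ (N₁ + 2 * p) := by
          apply mul_le_mul_of_nonneg_right (le_max_left _ _) (by positivity)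
  have hI2' : I ≤ max CI2 0 * ε ^ (m + p) := by
    have h := hI2 ε hε0 hltI2
    rw [Real.norm_eq_abs] at h
    calc I ≤ |I| := le_abs_self _
      _ ≤ CI2 * ε ^ (m + p) := h
      _ ≤ max CI2 0 * ε ^ (m + p) := by
          apply mul_le_mul_of_nonneg_right (le_max_left _ _) (by positivity)
  have hmin : M / 2 * min (M / (2 * Λ)) (ε ^ m / 2) ≤ I := by
    refine le_trans ?_ hkey
    apply mul_le_mul_of_nonneg_left _ (by linarith)
    exact min_le_min le_rfl (by linarith)
  have hMbound : M ≤ (D1 + D2) * ε ^ p := by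
    rcases le_total (M / (2 * Λ)) (ε ^ m / 2) with hc | hc
    · have h1 : M / 2 * (M / (2 * Λ)) ≤ I := by rwa [min_eq_left hc] at hmin
      have hΛne : Λ ≠ 0 := ne_of_gt hΛpos
      have h2 : M ^ 2 ≤ 4 * Λ * I := by
        have e : M / 2 * (M / (2 * Λ)) = M ^ 2 / (4 * Λ) := by field_simp; ring
        rw [e, div_le_iff₀ (by positivity)] at h1
        linarith
      have h3 : 4 * Λ * I ≤ 4 * K1 * max CI1 0 * ε ^ (2 * p) := by
        have h4 : 4 * Λ * I ≤ 4 * Λ * (max CI1 0 * ε ^ (N₁ + 2 * p)) := by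
          apply mul_le_mul_of_nonneg_left hI1' (by positivity)
        have e : 4 * Λ * (max CI1 0 * ε ^ (N₁ + 2 * p)) = 4 * K1 * max CI1 0 * ε ^ (2 * p) := by
          rw [hΛdef, pow_add]
          field_simp
        linarith
      have h4 : M ^ 2 ≤ (D1 * ε ^ p) ^ 2 := by
        have e : (D1 * ε ^ p) ^ 2 = 4 * K1 * max CI1 0 * ε ^ (2 * p) := by
          rw [mul_pow, hD1def, Real.sq_sqrt (by positivity), ← pow_mul]
          ring_nf
        rw [e]; linarith
      have h5 : M ≤ D1 * ε ^ p :=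
        (pow_le_pow_iff_left₀ hM0 (by positivity) two_ne_zero).mp h4
      have h6 : (0:ℝ) ≤ D2 * ε ^ p := by positivity
      rw [add_mul]; linarith
    · have h1 : M / 2 * (ε ^ m / 2) ≤ I := by rwa [min_eq_right hc] at hmin
      have h2 : M ≤ 4 * I / ε ^ m := by
        rw [le_div_iff₀ hεmpos]; linarith
      have h3 : 4 * I / ε ^ m ≤ D2 * ε ^ p := by
        rw [div_le_iff₀ hεmpos]
        calc 4 * I ≤ 4 * (max CI2 0 * ε ^ (m + p)) := by linarith
          _ = D2 * ε ^ p * ε ^ m := by rw [hD2def, pow_add]; ring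
      have h6 : (0:ℝ) ≤ D1 * ε ^ p := by positivity
      rw [add_mul]; linarith
  have hXmem : x ε ∈ Set.Icc (-R) R := Set.mem_Icc.mpr (abs_le.mp hXR)
  have hx'R : x' ∈ Set.Icc (-R) R := hIccsub hx'mem
  have htri : ‖f ε (x ε)‖ ≤ M + Λ * (|n1 ε| + |n2 ε|) := by
    have h1 := hlip (x ε) hXmem x' hx'R
    have h2 : ‖f ε (x ε)‖ - M ≤ ‖f ε (x ε) - f ε x'‖ := norm_sub_norm_le _ _
    have h3 : Λ * |x ε - x'| ≤ Λ * (|n1 ε| + |n2 ε|) :=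
      mul_le_mul_of_nonneg_left hdist hΛpos.le
    linarith
  have hneg : Λ * (|n1 ε| + |n2 ε|) ≤ K1 * (max Cn1 0 + max Cn2 0) * ε ^ p := by
    have h1 : Λ * (|n1 ε| + |n2 ε|) ≤ Λ * ((max Cn1 0 + max Cn2 0) * ε ^ (N₁ + p)) := by
      apply mul_le_mul_of_nonneg_left _ hΛpos.le
      rw [add_mul]; linarith
    have e : Λ * ((max Cn1 0 + max Cn2 0) * ε ^ (N₁ + p))
        = K1 * (max Cn1 0 + max Cn2 0) * ε ^ p := by
      rw [hΛdef, pow_add]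
      field_simp
    linarith
  show ‖f ε (x ε)‖ ≤ _
  calc ‖f ε (x ε)‖ ≤ M + Λ * (|n1 ε| + |n2 ε|) := htri
    _ ≤ (D1 + D2) * ε ^ p + K1 * (max Cn1 0 + max Cn2 0) * ε ^ p := by linarith
    _ = (D1 + D2 + K1 * (max Cn1 0 + max Cn2 0)) * ε ^ p := by ring
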